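/- Let φ : L → L' be a surjective homomorphism of co-Heyting algebras (preserving ⊥, ⊤, ⊔, ⊓ and \) and d a natural number. If the ideal dL is principal, generated by e ∈ L (i.e. dL = { x ∈ L | x ≤ e }), then dL' is principal, generated by φ(e) (i.e. dL' = { y ∈ L' | y ≤ φ(e) }). -/
import Mathlib


/-- A prime filter of a bounded lattice: upward closed, closed under `⊓`,
contains `⊤`, does not contain `⊥`, and prime with respect to `⊔`. -/
def IsPrimeFilter {L : Type*} [Lattice L] [BoundedOrder L] (p : Set L) : Prop :=
  (∀ x ∈ p, ∀ y : L, x ≤ y → y ∈ p) ∧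
  (∀ x ∈ p, ∀ y ∈ p, x ⊓ y ∈ p) ∧
  (⊤ : L) ∈ p ∧ (⊥ : L) ∉ p ∧
  ∀ x y : L, x ⊔ y ∈ p → x ∈ p ∨ y ∈ p

/-- `dim a ≥ n`: there is a strictly increasing chain `p 0 ⊊ p 1 ⊊ ⋯ ⊊ p n`
of prime filters with `a ∈ p 0`. -/
def DimGE {L : Type*} [Lattice L] [BoundedOrder L] (a : L) (n : ℕ) : Prop :=
  ∃ p : Fin (n + 1) → Set L, (∀ i, IsPrimeFilter (p i)) ∧
    (∀ i j : Fin (n + 1), i < j → p i ⊂ p j) ∧ a ∈ p 0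

/-- `codim a ≥ n`: every prime filter `p` containing `a` admits a strictly
increasing chain `q n ⊊ ⋯ ⊊ q 1 ⊊ q 0 = p` of prime filters. -/
def CodimGE {L : Type*} [Lattice L] [BoundedOrder L] (a : L) (n : ℕ) : Prop :=
  ∀ p : Set L, IsPrimeFilter p → a ∈ p →
    ∃ q : Fin (n + 1) → Set L, (∀ i, IsPrimeFilter (q i)) ∧
      (∀ i j : Fin (n + 1), i < j → q j ⊂ q i) ∧ q 0 = p

/-- The strong order: `b ≪ a` iff for every `c`, `a ≤ b ⊔ c` implies `a ≤ c`. -/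
def StrongBelow {L : Type*} [Lattice L] (b a : L) : Prop :=
  ∀ c : L, a ≤ b ⊔ c → a ≤ c

section Helpers

variable {L L' : Type*}

/-- Separation: if `b` is not in the ideal `I`, there is a prime filter containing `b`
and disjoint from `I`. -/
lemma exists_primeFilter_of_not_mem_ideal [DistribLattice L] [BoundedOrder L]
    (I : Order.Ideal L) (b : L) (hb : b ∉ I) :
    ∃ P : Set L, IsPrimeFilter P ∧ b ∈ P ∧ ∀ z ∈ I, z ∉ P := by
  have hdisj : Disjoint ((Order.PFilter.principal b : Order.PFilter L) : Set L) (I : Set L) := by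
    rw [Set.disjoint_left]
    intro x hx hxI
    exact hb (I.lower (Order.PFilter.mem_principal.mp hx) hxI)
  obtain ⟨J, hJp, hIJ, hJd⟩ := DistribLattice.prime_ideal_of_disjoint_filter_ideal hdisj
  have hmemF : ∀ x : L, b ≤ x → x ∉ J := fun x hx hxJ =>
    Set.disjoint_left.mp hJd (Order.PFilter.mem_principal.mpr hx) hxJ
  refine ⟨{z | z ∉ J}, ⟨?_, ?_, ?_, ?_, ?_⟩, hmemF b le_rfl, fun z hz hzc => hzc (hIJ hz)⟩
  · intro x hx y hxy hyJ
    exact hx (J.lower hxy hyJ)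
  · intro x hx y hy hxyJ
    rcases hJp.mem_or_mem hxyJ with h | h
    · exact hx h
    · exact hy h
  · exact hmemF ⊤ le_top
  · simp only [Set.mem_setOf_eq, not_not]
    exact J.bot_mem
  · intro x y hxy
    by_contra hcon
    push_neg at hcon
    simp only [Set.mem_setOf_eq, not_not] at hcon
    exact hxy (J.sup_mem hcon.1 hcon.2)

/-- Given a prime filter `q` containing `b` and `s` with `b \ s = b`, there is a
strictly smaller prime filter containing `b` (and omitting `s`). -/
lemma exists_primeFilter_ssubset [CoheytingAlgebra L] {q : Set L} (hq : IsPrimeFilter q)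
    {b s : L} (hb : b ∈ q) (hs : s ∈ q) (hbs : b \ s = b) :
    ∃ P : Set L, IsPrimeFilter P ∧ P ⊂ q ∧ b ∈ P := by
  -- the ideal generated by the complement of q together with s
  have hIdeal : Order.IsIdeal {z : L | ∃ t : L, t ∉ q ∧ z ≤ t ⊔ s} := by
    constructor
    · intro x y hxy ⟨t, ht, hle⟩
      exact ⟨t, ht, hxy.trans hle⟩
    · exact ⟨⊥, ⊥, hq.2.2.2.1, bot_le⟩
    · rintro x ⟨t1, ht1, hle1⟩ y ⟨t2, ht2, hle2⟩
      refine ⟨x ⊔ y, ⟨t1 ⊔ t2, ?_, ?_⟩, le_sup_left, le_sup_right⟩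
      · intro hmem
        rcases hq.2.2.2.2 t1 t2 hmem with h | h
        · exact ht1 h
        · exact ht2 h
      · exact sup_le (hle1.trans (sup_le_sup_right le_sup_left s))
          (hle2.trans (sup_le_sup_right le_sup_right s))
  set I : Order.Ideal L := hIdeal.toIdeal
  have hbI : b ∉ I := by
    rintro ⟨t, ht, hle⟩
    have : b \ s ≤ t := sdiff_le_iff.mpr (by rwa [sup_comm])
    rw [hbs] at this
    exact ht (hq.1 b hb t this)
  obtain ⟨P, hP, hbP, hPd⟩ := exists_primeFilter_of_not_mem_ideal I b hbI
  have hsI : s ∈ I := ⟨⊥, hq.2.2.2.1, le_sup_right⟩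
  refine ⟨P, hP, ⟨?_, ?_⟩, hbP⟩
  · intro z hz
    by_contra hzq
    exact hPd z ⟨z, hzq, le_sup_left⟩ hz
  · intro hsub
    exact hPd s hsI (hsub hs)

/-- From a nested strong chain `c 0 ≤ c 1 ≤ ⋯` one builds a strictly decreasing chain of
prime filters below any prime filter containing `c 0`. -/
lemma chain_of_nested [CoheytingAlgebra L] :
    ∀ (n : ℕ) (c : ℕ → L), (∀ i < n, c i ≤ c (i + 1)) →
      (∀ i < n, c (i + 1) \ c i = c (i + 1)) →
      ∀ q : Set L, IsPrimeFilter q → c 0 ∈ q →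
      ∃ r : ℕ → Set L, (∀ i ≤ n, IsPrimeFilter (r i)) ∧
        (∀ i j : ℕ, i < j → j ≤ n → r j ⊂ r i) ∧ r 0 = q := by
  intro n
  induction n with
  | zero =>
    intro c _ _ q hq hc
    exact ⟨fun _ => q, fun _ _ => hq, fun i j hij hj => absurd (hij.trans_le hj) (by omega), rfl⟩
  | succ n ih =>
    intro c hm hstr q hq hc0
    have hc1 : c 1 ∈ q := hq.1 (c 0) hc0 (c 1) (hm 0 (by omega))
    obtain ⟨P, hP, hPq, hbP⟩ :=
      exists_primeFilter_ssubset hq hc1 hc0 (hstr 0 (by omega))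
    obtain ⟨r', hr'1, hr'2, hr'0⟩ := ih (fun i => c (i + 1))
      (fun i hi => hm (i + 1) (by omega)) (fun i hi => hstr (i + 1) (by omega)) P hP hbP
    refine ⟨fun i => match i with | 0 => q | (k + 1) => r' k, ?_, ?_, rfl⟩
    · intro i hi
      match i with
      | 0 => exact hq
      | (k + 1) => exact hr'1 k (by omega)
    · intro i j hij hj
      match j with
      | (k + 1) =>
        have hrk : r' k ⊆ P := by
          rcases Nat.eq_zero_or_pos k with hk | hk
          · subst hk; rw [hr'0]
          · exact ((hr'2 0 k hk (by omega)).trans_eq hr'0).subset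
        match i with
        | 0 => exact (Set.ssubset_of_subset_of_ssubset hrk hPq :)
        | (m + 1) => exact hr'2 m k (by omega) (by omega)

/-- A nested strong chain starting at `a` witnesses `codim a ≥ n`. -/
lemma codimGE_of_nested [CoheytingAlgebra L] (n : ℕ) (c : ℕ → L)
    (hm : ∀ i < n, c i ≤ c (i + 1)) (hstr : ∀ i < n, c (i + 1) \ c i = c (i + 1)) :
    CodimGE (c 0) n := by
  intro p hp hcp
  obtain ⟨r, h1, h2, h3⟩ := chain_of_nested n c hm hstr p hp hcp
  refine ⟨fun i => r i, fun i => h1 i (by omega), fun i j hij => ?_, h3⟩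
  exact h2 i j (by exact_mod_cast hij) (by omega)

/-- From a strictly decreasing chain of prime filters of length `n` one extracts a
nested strong chain whose bottom element lies in the top filter. -/
lemma exists_nested [CoheytingAlgebra L] :
    ∀ (n : ℕ) (r : ℕ → Set L), (∀ i ≤ n, IsPrimeFilter (r i)) →
      (∀ i j : ℕ, i < j → j ≤ n → r j ⊂ r i) →
      ∃ c : ℕ → L, (∀ i < n, c i ≤ c (i + 1) ∧ c (i + 1) \ c i = c (i + 1)) ∧ c 0 ∈ r 0 := by
  intro n
  induction n with
  | zero =>
    intro r h1 _
    exact ⟨fun _ => ⊤, fun i hi => absurd hi (by omega), (h1 0 le_rfl).2.2.1⟩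
  | succ n ih =>
    intro r h1 h2
    obtain ⟨c', hc', hc'0⟩ := ih (fun i => r (i + 1)) (fun i hi => h1 (i + 1) (by omega))
      (fun i j hij hj => h2 (i + 1) (j + 1) (by omega) (by omega))
    have h01 : r 1 ⊂ r 0 := h2 0 1 (by omega) (by omega)
    obtain ⟨s, hs0, hs1⟩ := Set.not_subset.mp h01.2
    have hq1 : IsPrimeFilter (r 1) := h1 1 (by omega)
    have hq0 : IsPrimeFilter (r 0) := h1 0 (by omega)
    -- c' 0 \ s ∈ r 1
    have hcs : c' 0 \ s ∈ r 1 := by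
      rcases hq1.2.2.2.2 s (c' 0 \ s) (hq1.1 (c' 0) hc'0 _ le_sup_sdiff) with h | h
      · exact absurd h hs1
      · exact h
    set c : ℕ → L := fun i => match i with
      | 0 => (c' 0 \ s) ⊓ s
      | 1 => c' 0 \ s
      | (k + 2) => c' (k + 1) with hc
    have hcmem : c 0 ∈ r 0 := hq0.2.1 _ (h01.subset hcs) s hs0
    refine ⟨c, ?_, hcmem⟩
    intro i hi
    match i with
    | 0 =>
      constructor
      · exact inf_le_left
      · show (c' 0 \ s) \ ((c' 0 \ s) ⊓ s) = c' 0 \ s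
        rw [sdiff_inf, sdiff_self, bot_sup_eq, sdiff_idem]
    | 1 =>
      have hn : 0 < n := by omega
      constructor
      · show c' 0 \ s ≤ c' 1
        exact sdiff_le.trans (hc' 0 hn).1
      · show c' 1 \ (c' 0 \ s) = c' 1
        refine le_antisymm sdiff_le ?_
        calc c' 1 = c' 1 \ c' 0 := ((hc' 0 hn).2).symm
          _ ≤ c' 1 \ (c' 0 \ s) := sdiff_le_sdiff_left sdiff_le
    | (k + 2) =>
      have := hc' (k + 1) (by omega)
      exact ⟨this.1, this.2⟩

/-- Key lemma: if `{x | codim x ≥ d} ⊆ ↓e` and a prime filter `p` admits a strictly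
decreasing chain of length `d`, then `e ∈ p`. -/
lemma mem_of_chain [CoheytingAlgebra L] {d : ℕ} {e : L}
    (he : ∀ a : L, CodimGE a d → a ≤ e)
    {p : Set L} (hp : IsPrimeFilter p)
    (q : Fin (d + 1) → Set L) (hq1 : ∀ i, IsPrimeFilter (q i))
    (hq2 : ∀ i j : Fin (d + 1), i < j → q j ⊂ q i) (hq0 : q 0 = p) : e ∈ p := by
  set r : ℕ → Set L := fun i => q ⟨min i d, by omega⟩ with hr
  have h1 : ∀ i ≤ d, IsPrimeFilter (r i) := fun i _ => hq1 _
  have h2 : ∀ i j : ℕ, i < j → j ≤ d → r j ⊂ r i := by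
    intro i j hij hj
    have : (⟨min i d, by omega⟩ : Fin (d + 1)) < ⟨min j d, by omega⟩ := by
      simp only [Fin.mk_lt_mk]
      omega
    exact hq2 _ _ this
  obtain ⟨c, hc, hc0⟩ := exists_nested d r h1 h2
  have hcod : CodimGE (c 0) d :=
    codimGE_of_nested d c (fun i hi => (hc i hi).1) (fun i hi => (hc i hi).2)
  have hce : c 0 ≤ e := he _ hcod
  have hr0 : r 0 = p := by
    rw [hr]
    simpa using hq0
  rw [hr0] at hc0
  exact hp.1 (c 0) hc0 e hce

/-- Preimage of a prime filter under a co-Heyting morphism is a prime filter. -/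
lemma isPrimeFilter_preimage [CoheytingAlgebra L] [CoheytingAlgebra L']
    (φ : CoheytingHom L L') {p : Set L'} (hp : IsPrimeFilter p) :
    IsPrimeFilter (φ ⁻¹' p) := by
  refine ⟨?_, ?_, ?_, ?_, ?_⟩
  · intro x hx y hxy
    exact hp.1 (φ x) hx (φ y) (OrderHomClass.mono φ hxy)
  · intro x hx y hy
    show φ (x ⊓ y) ∈ p
    rw [map_inf]
    exact hp.2.1 _ hx _ hy
  · show φ ⊤ ∈ p
    rw [map_top]
    exact hp.2.2.1
  · show φ ⊥ ∉ p
    rw [map_bot]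
    exact hp.2.2.2.1
  · intro x y hxy
    have : φ x ⊔ φ y ∈ p := by rw [← map_sup]; exact hxy
    exact hp.2.2.2.2 _ _ this

/-- `CodimGE` is downward closed. -/
lemma codimGE_of_le {n : ℕ} [Lattice L] [BoundedOrder L] {a b : L} (h : a ≤ b)
    (hb : CodimGE b n) : CodimGE a n :=
  fun p hp hap => hb p hp (hp.1 a hap b h)

/-- Surjective co-Heyting morphisms do not decrease codimension. -/
lemma codimGE_map [CoheytingAlgebra L] [CoheytingAlgebra L']
    (φ : CoheytingHom L L') (hφ : Function.Surjective φ) {a : L} {n : ℕ}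
    (ha : CodimGE a n) : CodimGE (φ a) n := by
  intro p' hp' hap'
  have hp : IsPrimeFilter (φ ⁻¹' p') := isPrimeFilter_preimage φ hp'
  obtain ⟨q, hq1, hq2, hq0⟩ := ha (φ ⁻¹' p') hp hap'
  have hsub : ∀ i : Fin (n + 1), q i ⊆ q 0 := by
    intro i
    rcases eq_or_ne i 0 with h | h
    · rw [h]
    · exact (hq2 0 i (Fin.pos_of_ne_zero h)).subset
  have hker : ∀ i : Fin (n + 1), ∀ x ∈ q i, φ x ≠ ⊥ := by
    intro i x hx hbot
    have : x ∈ φ ⁻¹' p' := hq0 ▸ hsub i hx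
    rw [Set.mem_preimage, hbot] at this
    exact hp'.2.2.2.1 this
  refine ⟨fun i => {y : L' | ∃ x ∈ q i, φ x ≤ y}, ?_, ?_, ?_⟩
  · intro i
    refine ⟨?_, ?_, ?_, ?_, ?_⟩
    · rintro y ⟨x, hx, hle⟩ y' hyy'
      exact ⟨x, hx, hle.trans hyy'⟩
    · rintro y1 ⟨x1, hx1, hle1⟩ y2 ⟨x2, hx2, hle2⟩
      exact ⟨x1 ⊓ x2, (hq1 i).2.1 _ hx1 _ hx2, by rw [map_inf]; exact inf_le_inf hle1 hle2⟩
    · exact ⟨⊤, (hq1 i).2.2.1, le_top⟩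
    · rintro ⟨x, hx, hle⟩
      exact hker i x hx (le_bot_iff.mp hle)
    · rintro y1 y2 ⟨x, hx, hle⟩
      obtain ⟨z1, hz1⟩ := hφ y1
      rcases (hq1 i).2.2.2.2 z1 (x \ z1) ((hq1 i).1 x hx _ le_sup_sdiff) with h | h
      · exact Or.inl ⟨z1, h, hz1.le⟩
      · refine Or.inr ⟨x \ z1, h, ?_⟩
        rw [map_sdiff, hz1]
        exact sdiff_le_iff.mpr hle
  · intro i j hij
    constructor
    · rintro y ⟨x, hx, hle⟩
      exact ⟨x, (hq2 i j hij).subset hx, hle⟩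
    · intro hcon
      obtain ⟨x, hxi, hxj⟩ := Set.not_subset.mp (hq2 i j hij).2
      obtain ⟨z, hz, hle⟩ := hcon ⟨x, hxi, le_rfl⟩
      have hzx : φ (z \ x) = ⊥ := by rw [map_sdiff]; exact sdiff_eq_bot_iff.mpr hle
      rcases (hq1 j).2.2.2.2 x (z \ x) ((hq1 j).1 z hz _ le_sup_sdiff) with h | h
      · exact hxj h
      · exact hker j _ h hzx
  · ext y
    constructor
    · rintro ⟨x, hx, hle⟩
      rw [hq0] at hx
      exact hp'.1 (φ x) hx y hle
    · intro hy
      obtain ⟨x, hx⟩ := hφ y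
      exact ⟨x, by rw [hq0, Set.mem_preimage, hx]; exact hy, hx.le⟩

end Helpers

theorem stmt8 {L L' : Type*} [CoheytingAlgebra L] [CoheytingAlgebra L']
    (φ : CoheytingHom L L') (hφ : Function.Surjective φ) (d : ℕ)
    (e : L) (he : {x : L | CodimGE x d} = {x : L | x ≤ e}) :
    {y : L' | CodimGE y d} = {y : L' | y ≤ φ e} := by
  have he' : ∀ a : L, CodimGE a d ↔ a ≤ e := fun a => Set.ext_iff.mp he a
  ext y
  simp only [Set.mem_setOf_eq]
  constructor
  · -- hard direction
    intro hy
    by_contra hle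
    obtain ⟨p', hp', hyp', hPd⟩ :=
      exists_primeFilter_of_not_mem_ideal (Order.Ideal.principal (φ e)) y
        (by rwa [Order.Ideal.mem_principal])
    have hep' : φ e ∉ p' := hPd (φ e) (Order.Ideal.mem_principal.mpr le_rfl)
    obtain ⟨q', hq1, hq2, hq0⟩ := hy p' hp' hyp'
    -- pull the chain back to L
    have hq1' : ∀ i : Fin (d + 1), IsPrimeFilter (φ ⁻¹' (q' i)) := fun i =>
      isPrimeFilter_preimage φ (hq1 i)
    have hq2' : ∀ i j : Fin (d + 1), i < j → φ ⁻¹' (q' j) ⊂ φ ⁻¹' (q' i) := by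
      intro i j hij
      constructor
      · exact Set.preimage_mono (hq2 i j hij).subset
      · intro hcon
        obtain ⟨y', hyi, hyj⟩ := Set.not_subset.mp (hq2 i j hij).2
        obtain ⟨x, hx⟩ := hφ y'
        have hxi : x ∈ φ ⁻¹' (q' i) := by rw [Set.mem_preimage, hx]; exact hyi
        have := hcon hxi
        rw [Set.mem_preimage, hx] at this
        exact hyj this
    have hmem : e ∈ φ ⁻¹' p' := by
      refine mem_of_chain (fun a ha => (he' a).mp ha)
        (isPrimeFilter_preimage φ hp') (fun i => φ ⁻¹' (q' i)) hq1' hq2' ?_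
      show φ ⁻¹' (q' 0) = φ ⁻¹' p'
      rw [hq0]
    exact hep' hmem
  · -- easy direction
    intro hy
    have hecod : CodimGE e d := (he' e).mpr le_rfl
    exact codimGE_of_le hy (codimGE_map φ hφ hecod)
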